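/- Let X, Y be fuzzy strong φ-b-normed linear spaces with the same φ and K, let *₂ be the lower semi-continuous t-norm of Y, and for x ≠ 0 write d_{1−α}(x) = inf{t>0 : N₁(x,t) ≥ 1−α}. For a fuzzy bounded linear operator T define N(T,s) = sup{α ∈ (0,1) : sup_{x ≠ 0} inf{ t/d_{1−α}(x) : t > 0, N₂(Tx,t) ≥ α } ≤ s} for (T,s) ≠ (0,0) and N(0,0)=0. Then N satisfies the homogeneity axiom: N(λT, s) = N(T, s/φ(λ)) for every scalar λ > 0 and all s. -/

import Mathlib

open Filter Topology

structure PhiFun (φ : ℝ → ℝ) : Prop where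
  even : ∀ t, φ (-t) = φ t
  one : φ 1 = 1
  strictMono : StrictMonoOn φ (Set.Ioi 0)
  contOn : ContinuousOn φ (Set.Ioi 0)
  tendsto_zero : Tendsto φ (nhdsWithin 0 (Set.Ioi 0)) (nhds 0)
  tendsto_atTop : Tendsto φ atTop atTop

structure IsTNorm (star : ℝ → ℝ → ℝ) : Prop where
  mem : ∀ a ∈ Set.Icc (0:ℝ) 1, ∀ b ∈ Set.Icc (0:ℝ) 1, star a b ∈ Set.Icc (0:ℝ) 1
  assoc : ∀ a b c, star (star a b) c = star a (star b c)
  comm : ∀ a b, star a b = star b a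
  one_right : ∀ a ∈ Set.Icc (0:ℝ) 1, star a 1 = a
  mono : ∀ a b c d, a ≤ b → c ≤ d → star a c ≤ star b d

structure IsFuzzyPhiBNorm {X : Type*} [AddCommGroup X] [Module ℝ X]
    (N : X → ℝ → ℝ) (φ : ℝ → ℝ) (K : ℝ) (star : ℝ → ℝ → ℝ) : Prop where
  one_le_K : 1 ≤ K
  phi : PhiFun φ
  tnorm : IsTNorm star
  mem : ∀ x t, N x t ∈ Set.Icc (0:ℝ) 1
  bN1 : ∀ x : X, ∀ t ≤ (0:ℝ), N x t = 0
  bN2 : ∀ x : X, (∀ t > (0:ℝ), N x t = 1) ↔ x = 0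
  bN3 : ∀ (c : ℝ) (x : X), ∀ t > (0:ℝ), φ c ≠ 0 → N (c • x) t = N x (t / φ c)
  bN4 : ∀ (x y : X) (s t : ℝ), star (N x s) (N y t) ≤ N (x + y) (s + K * t)
  bN5 : ∀ x : X, Monotone (N x) ∧ Tendsto (N x) atTop (nhds 1)

noncomputable def FuzzyBounded {X Y : Type*} [AddCommGroup X] [Module ℝ X]
    [AddCommGroup Y] [Module ℝ Y]
    (N1 : X → ℝ → ℝ) (N2 : Y → ℝ → ℝ) (K : ℝ) (T : X →ₗ[ℝ] Y) : Prop :=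
  ∀ α ∈ Set.Ioo (0:ℝ) 1, ∃ M > (0:ℝ), ∀ x : X,
    sInf {t | 0 < t ∧ α ≤ N2 (T x) (K * t)} ≤ M * sInf {t | 0 < t ∧ 1 - α ≤ N1 x t}

noncomputable def dd {X : Type*} [AddCommGroup X] [Module ℝ X]
    (N1 : X → ℝ → ℝ) (α : ℝ) (x : X) : ℝ :=
  sInf {t | 0 < t ∧ 1 - α ≤ N1 x t}

noncomputable def opSup {X Y : Type*} [AddCommGroup X] [Module ℝ X]
    [AddCommGroup Y] [Module ℝ Y]
    (N1 : X → ℝ → ℝ) (N2 : Y → ℝ → ℝ) (T : X →ₗ[ℝ] Y) (α : ℝ) : ℝ :=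
  sSup {r | ∃ x : X, x ≠ 0 ∧
    r = sInf ((fun t => t / dd N1 α x) '' {t | 0 < t ∧ α ≤ N2 (T x) t})}

open scoped Classical in
noncomputable def opN {X Y : Type*} [AddCommGroup X] [Module ℝ X]
    [AddCommGroup Y] [Module ℝ Y]
    (N1 : X → ℝ → ℝ) (N2 : Y → ℝ → ℝ) (T : X →ₗ[ℝ] Y) (s : ℝ) : ℝ :=
  if T = 0 ∧ s = 0 then 0
  else sSup {α | α ∈ Set.Ioo (0:ℝ) 1 ∧ opSup N1 N2 T α ≤ s}

open scoped Pointwise in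
lemma PhiFun.pos' {φ : ℝ → ℝ} (h : PhiFun φ) {t : ℝ} (ht : 0 < t) : 0 < φ t := by
  by_contra hle
  push_neg at hle
  have hhalf : φ (t / 2) < φ t :=
    h.strictMono (Set.mem_Ioi.2 (half_pos ht)) (Set.mem_Ioi.2 ht) (half_lt_self ht)
  have hneg : φ (t / 2) < 0 := hhalf.trans_le hle
  have h1 : ∀ᶠ s in nhdsWithin 0 (Set.Ioi 0), φ (t / 2) < φ s :=
    h.tendsto_zero.eventually (eventually_gt_nhds hneg)
  have h2 : ∀ᶠ s in nhdsWithin 0 (Set.Ioi 0), s < t / 2 :=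
    eventually_nhdsWithin_of_eventually_nhds (eventually_lt_nhds (half_pos ht))
  have h3 : ∀ᶠ s in nhdsWithin 0 (Set.Ioi 0), s ∈ Set.Ioi (0:ℝ) :=
    eventually_mem_nhdsWithin
  obtain ⟨s, hs1, hs2, hs3⟩ := (h1.and (h2.and h3)).exists
  exact absurd (h.strictMono hs3 (Set.mem_Ioi.2 (half_pos ht)) hs2) (not_lt.2 hs1.le)

open scoped Pointwise in
theorem stmt11 {X Y : Type*} [AddCommGroup X] [Module ℝ X] [AddCommGroup Y] [Module ℝ Y]
    (N1 : X → ℝ → ℝ) (N2 : Y → ℝ → ℝ) (φ : ℝ → ℝ) (K : ℝ)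
    (star1 star2 : ℝ → ℝ → ℝ)
    (hN1 : IsFuzzyPhiBNorm N1 φ K star1) (hN2 : IsFuzzyPhiBNorm N2 φ K star2)
    (hN6 : ∀ x : X, x ≠ 0 → ∀ α ∈ Set.Ioo (0:ℝ) 1, 0 < dd N1 α x)
    (hlsc : ∀ a b c : ℝ, c < star2 a b → ∃ a' < a, ∃ b' < b, c < star2 a' b')
    (T : X →ₗ[ℝ] Y) (hT : FuzzyBounded N1 N2 K T)
    (lam : ℝ) (hlam : 0 < lam) :
    ∀ s : ℝ, opN N1 N2 (lam • T) s = opN N1 N2 T (s / φ lam) := by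
  intro s
  set c : ℝ := φ lam with hcdef
  have hc : 0 < c := hN2.phi.pos' hlam
  -- key: opSup scales
  have key : ∀ α : ℝ, opSup N1 N2 (lam • T) α = c * opSup N1 N2 T α := by
    intro α
    unfold opSup
    have hset : {r | ∃ x : X, x ≠ 0 ∧
        r = sInf ((fun t => t / dd N1 α x) '' {t | 0 < t ∧ α ≤ N2 ((lam • T) x) t})}
        = c • {r | ∃ x : X, x ≠ 0 ∧
        r = sInf ((fun t => t / dd N1 α x) '' {t | 0 < t ∧ α ≤ N2 (T x) t})} := by
      have hx : ∀ x : X,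
          sInf ((fun t => t / dd N1 α x) '' {t | 0 < t ∧ α ≤ N2 ((lam • T) x) t})
          = c * sInf ((fun t => t / dd N1 α x) '' {t | 0 < t ∧ α ≤ N2 (T x) t}) := by
        intro x
        have hS : {t | 0 < t ∧ α ≤ N2 ((lam • T) x) t}
            = c • {t | 0 < t ∧ α ≤ N2 (T x) t} := by
          ext t
          rw [Set.mem_smul_set_iff_inv_smul_mem₀ hc.ne']
          simp only [Set.mem_setOf_eq, smul_eq_mul, LinearMap.smul_apply]
          constructor
          · rintro ⟨ht, hα⟩
            rw [hN2.bN3 lam (T x) t ht hc.ne'] at hα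
            exact ⟨by positivity, by rwa [div_eq_inv_mul] at hα⟩
          · rintro ⟨ht, hα⟩
            have ht' : 0 < t := by
              have h2 := mul_pos hc ht
              rwa [mul_inv_cancel_left₀ hc.ne'] at h2
            refine ⟨ht', ?_⟩
            rw [hN2.bN3 lam (T x) t ht' hc.ne', div_eq_inv_mul]
            exact hα
        have himg : (fun t => t / dd N1 α x) '' {t | 0 < t ∧ α ≤ N2 ((lam • T) x) t}
            = c • ((fun t => t / dd N1 α x) '' {t | 0 < t ∧ α ≤ N2 (T x) t}) := by
          rw [hS, ← Set.image_smul, ← Set.image_comp, ← Set.image_smul, ← Set.image_comp]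
          congr 1
          funext u
          simp [smul_eq_mul, mul_div_assoc]
        rw [himg, Real.sInf_smul_of_nonneg hc.le, smul_eq_mul]
      ext r
      simp only [Set.mem_setOf_eq]
      constructor
      · rintro ⟨x, hx0, hr⟩
        exact ⟨sInf ((fun t => t / dd N1 α x) '' {t | 0 < t ∧ α ≤ N2 (T x) t}),
          ⟨x, hx0, rfl⟩, by simp only [smul_eq_mul]; rw [← hx x, ← hr]⟩
      · rintro ⟨r', ⟨x, hx0, hr'⟩, h⟩
        refine ⟨x, hx0, ?_⟩; simp only [smul_eq_mul] at h; rw [← h, hr', hx x]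
    rw [hset, Real.sSup_smul_of_nonneg hc.le, smul_eq_mul]
  have hT0 : (lam • T = 0) ↔ T = 0 := by
    constructor
    · intro h
      have := congrArg (fun S : X →ₗ[ℝ] Y => lam⁻¹ • S) h
      simpa [smul_smul, inv_mul_cancel₀ hlam.ne'] using this
    · rintro rfl; simp
  have hs0 : (s = 0) ↔ (s / c = 0) := by
    constructor
    · rintro rfl; simp
    · intro h; field_simp at h; simpa using h
  unfold opN
  by_cases hcond : T = 0 ∧ s / c = 0
  · rw [if_pos ⟨hT0.2 hcond.1, hs0.2 hcond.2⟩, if_pos hcond]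
  · have hcond' : ¬ (lam • T = 0 ∧ s = 0) := by
      intro h
      exact hcond ⟨hT0.1 h.1, hs0.1 h.2⟩
    rw [if_neg hcond', if_neg hcond]
    congr 1
    ext α
    simp only [Set.mem_setOf_eq, key]
    constructor
    · rintro ⟨h1, h2⟩
      exact ⟨h1, (le_div_iff₀ hc).2 (by linarith [mul_comm c (opSup N1 N2 T α)])⟩
    · rintro ⟨h1, h2⟩
      refine ⟨h1, ?_⟩
      have := (le_div_iff₀ hc).1 h2
      linarith [mul_comm (opSup N1 N2 T α) c]
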